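/- Let V be a VOA with V^∨ ≅ V, and suppose A and A^∨ are C_1-cofinite ℕ-gradable V-modules. Assume the fusion product ⊠ on the category of C_1-cofinite ℕ-gradable V-modules exists, is associative (B ⊠ (A ⊠ A^∨) ≅ (B ⊠ A) ⊠ A^∨), satisfies B ⊠ V ≅ B, and that there is a surjective intertwining map exhibiting V^∨ as a quotient of A ⊠ A^∨. Then for every nonzero C_1-cofinite ℕ-gradable V-module B, both A ⊠ B and B ⊠ A are nonzero. -/
import Mathlib


open CategoryTheory CategoryTheory.Limits

lemma isZero_of_epi_of_isZero {C : Type*} [Category C] [Limits.HasZeroMorphisms C]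
    {X Y : C} (f : X ⟶ Y) [Epi f] (hX : IsZero X) : IsZero Y := by
  rw [IsZero.iff_id_eq_zero]
  have hf : f = 0 := hX.eq_of_src f 0
  have : f ≫ 𝟙 Y = f ≫ 0 := by simp [hf]
  exact (cancel_epi f).mp this

/-- Corollary 4.12, abstractly: let `F` be a fusion-product bifunctor on a
category of modules (with zero morphisms) which preserves zero objects and
epimorphisms in each variable, admits associativity isomorphisms and unit
isomorphisms `X ⊠ V ≅ X`, `V ⊠ X ≅ X`, and suppose there are epimorphisms
`A ⊠ A^∨ ↠ V` and `A^∨ ⊠ A ↠ V` (coming from `V^∨ ≅ V` and skew-symmetry).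
Then for every nonzero `B`, both `A ⊠ B` and `B ⊠ A` are nonzero. -/
theorem fusion_with_rigid_nonzero
    {C : Type*} [Category C] [Limits.HasZeroMorphisms C]
    (F : C ⥤ C ⥤ C) (Vun A Adual : C)
    (hzero₁ : ∀ X Y : C, IsZero X → IsZero ((F.obj X).obj Y))
    (hzero₂ : ∀ X Y : C, IsZero X → IsZero ((F.obj Y).obj X))
    (hepi₂ : ∀ (X : C) {Y Z : C} (f : Y ⟶ Z), Epi f → Epi ((F.obj X).map f))
    (hepi₁ : ∀ (X : C) {Y Z : C} (f : Y ⟶ Z), Epi f → Epi ((F.map f).app X))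
    (assoc : ∀ X Y Z : C,
      Nonempty ((F.obj ((F.obj X).obj Y)).obj Z ≅ (F.obj X).obj ((F.obj Y).obj Z)))
    (unitR : ∀ X : C, Nonempty ((F.obj X).obj Vun ≅ X))
    (unitL : ∀ X : C, Nonempty ((F.obj Vun).obj X ≅ X))
    (e₁ : (F.obj A).obj Adual ⟶ Vun) (he₁ : Epi e₁)
    (e₂ : (F.obj Adual).obj A ⟶ Vun) (he₂ : Epi e₂)
    (B : C) (hB : ¬ IsZero B) :
    ¬ IsZero ((F.obj A).obj B) ∧ ¬ IsZero ((F.obj B).obj A) := by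
  constructor
  · intro h
    -- A^∨ ⊠ (A ⊠ B) is zero; it surjects onto B via assoc, e₂ and unitL
    have hz : IsZero ((F.obj ((F.obj Adual).obj A)).obj B) :=
      ((assoc Adual A B).some.isZero_iff).mpr (hzero₂ _ _ h)
    have hepi : Epi ((F.map e₂).app B) := hepi₁ B e₂ he₂
    have : IsZero ((F.obj Vun).obj B) :=
      isZero_of_epi_of_isZero ((F.map e₂).app B) hz
    exact hB (((unitL B).some.isZero_iff).mp this)
  · intro h
    -- (B ⊠ A) ⊠ A^∨ is zero; it surjects onto B via assoc, e₁ and unitR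
    have hz : IsZero ((F.obj B).obj ((F.obj A).obj Adual)) :=
      ((assoc B A Adual).some.isZero_iff).mp (hzero₁ _ _ h)
    have hepi : Epi ((F.obj B).map e₁) := hepi₂ B e₁ he₁
    have : IsZero ((F.obj B).obj Vun) :=
      isZero_of_epi_of_isZero ((F.obj B).map e₁) hz
    exact hB (((unitR B).some.isZero_iff).mp this)
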